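/- At any fixed point (u₀, v₀) with u₀ > 0, v₀ > 0 of the system u' = P(u,v), v' = Q(u,v), where P(u,v) = u·(r_x - C_xx·u - C_xy·v + α·v/(β+μ(u+v))) and Q(u,v) = v·(r_y - C_yx·u - C_yy·v - α·u/(β+μ(u+v))), the trace of the Jacobian matrix equals -C_xx·u₀ - C_yy·v₀, which is strictly negative when C_xx, C_yy > 0. -/

import Mathlib

/-- At any interior fixed point (u₀,v₀) of the two-trait HGT system, the trace of the
Jacobian equals -Cxx·u₀ - Cyy·v₀ < 0 (when Cxx, Cyy > 0). -/
theorem trace_jacobian_at_interior_fixed_point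
    (rx ry Cxx Cxy Cyx Cyy α β μ : ℝ) (hβ : 0 < β) (hμ : 0 ≤ μ)
    (hCxx : 0 < Cxx) (hCyy : 0 < Cyy)
    (P Q : ℝ → ℝ → ℝ)
    (hP : ∀ u v, P u v = u * (rx - Cxx * u - Cxy * v + α * v / (β + μ * (u + v))))
    (hQ : ∀ u v, Q u v = v * (ry - Cyx * u - Cyy * v - α * u / (β + μ * (u + v))))
    (u₀ v₀ : ℝ) (hu : 0 < u₀) (hv : 0 < v₀)
    (hfix : P u₀ v₀ = 0 ∧ Q u₀ v₀ = 0) :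
    deriv (fun u => P u v₀) u₀ + deriv (fun v => Q u₀ v) v₀ = -Cxx * u₀ - Cyy * v₀ ∧
    deriv (fun u => P u v₀) u₀ + deriv (fun v => Q u₀ v) v₀ < 0 := by
  obtain ⟨hf1, hf2⟩ := hfix
  have hD : 0 < β + μ * (u₀ + v₀) :=
    add_pos_of_pos_of_nonneg hβ (mul_nonneg hμ (by linarith))
  have hDne : β + μ * (u₀ + v₀) ≠ 0 := hD.ne'
  -- fixed point equations
  have hz1 : rx - Cxx * u₀ - Cxy * v₀ + α * v₀ / (β + μ * (u₀ + v₀)) = 0 := by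
    rw [hP] at hf1
    rcases mul_eq_zero.mp hf1 with h | h
    · linarith
    · exact h
  have hz2 : ry - Cyx * u₀ - Cyy * v₀ - α * u₀ / (β + μ * (u₀ + v₀)) = 0 := by
    rw [hQ] at hf2
    rcases mul_eq_zero.mp hf2 with h | h
    · linarith
    · exact h
  -- derivative of P in u
  have hden1 : HasDerivAt (fun u : ℝ => β + μ * (u + v₀)) μ u₀ := by
    simpa using (((hasDerivAt_id u₀).add_const v₀).const_mul μ).const_add β
  have hdiv1 : HasDerivAt (fun u : ℝ => α * v₀ / (β + μ * (u + v₀)))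
      ((0 * (β + μ * (u₀ + v₀)) - α * v₀ * μ) / (β + μ * (u₀ + v₀)) ^ 2) u₀ :=
    (hasDerivAt_const u₀ (α * v₀)).div hden1 hDne
  have hin1 : HasDerivAt (fun u : ℝ => rx - Cxx * u - Cxy * v₀ + α * v₀ / (β + μ * (u + v₀)))
      (-Cxx + (0 * (β + μ * (u₀ + v₀)) - α * v₀ * μ) / (β + μ * (u₀ + v₀)) ^ 2) u₀ := by
    have h1 : HasDerivAt (fun u : ℝ => rx - Cxx * u - Cxy * v₀) (-Cxx) u₀ := by
      simpa using ((((hasDerivAt_id u₀).const_mul Cxx).const_sub rx).sub_const (Cxy * v₀))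
    exact h1.add hdiv1
  have hPd : HasDerivAt (fun u => P u v₀)
      (1 * (rx - Cxx * u₀ - Cxy * v₀ + α * v₀ / (β + μ * (u₀ + v₀))) +
        u₀ * (-Cxx + (0 * (β + μ * (u₀ + v₀)) - α * v₀ * μ) / (β + μ * (u₀ + v₀)) ^ 2)) u₀ := by
    have := (hasDerivAt_id u₀).mul hin1
    simp only [hP]
    simpa [Pi.mul_def] using this
  -- derivative of Q in v
  have hden2 : HasDerivAt (fun v : ℝ => β + μ * (u₀ + v)) μ v₀ := by
    simpa using (((hasDerivAt_id v₀).const_add u₀).const_mul μ).const_add β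
  have hdiv2 : HasDerivAt (fun v : ℝ => α * u₀ / (β + μ * (u₀ + v)))
      ((0 * (β + μ * (u₀ + v₀)) - α * u₀ * μ) / (β + μ * (u₀ + v₀)) ^ 2) v₀ :=
    (hasDerivAt_const v₀ (α * u₀)).div hden2 hDne
  have hin2 : HasDerivAt (fun v : ℝ => ry - Cyx * u₀ - Cyy * v - α * u₀ / (β + μ * (u₀ + v)))
      (-Cyy - (0 * (β + μ * (u₀ + v₀)) - α * u₀ * μ) / (β + μ * (u₀ + v₀)) ^ 2) v₀ := by
    have h1 : HasDerivAt (fun v : ℝ => ry - Cyx * u₀ - Cyy * v) (-Cyy) v₀ := by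
      simpa using ((((hasDerivAt_id v₀).const_mul Cyy).const_sub (ry - Cyx * u₀)))
    exact h1.sub hdiv2
  have hQd : HasDerivAt (fun v => Q u₀ v)
      (1 * (ry - Cyx * u₀ - Cyy * v₀ - α * u₀ / (β + μ * (u₀ + v₀))) +
        v₀ * (-Cyy - (0 * (β + μ * (u₀ + v₀)) - α * u₀ * μ) / (β + μ * (u₀ + v₀)) ^ 2)) v₀ := by
    have := (hasDerivAt_id v₀).mul hin2
    simp only [hQ]
    simpa [Pi.mul_def] using this
  have key : deriv (fun u => P u v₀) u₀ + deriv (fun v => Q u₀ v) v₀ = -Cxx * u₀ - Cyy * v₀ := by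
    rw [hPd.deriv, hQd.deriv, hz1, hz2]
    field_simp
    ring
  refine ⟨key, ?_⟩
  rw [key]
  nlinarith
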